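/- Let $x_1, x_2$ be i.i.d. with law $S\,\delta_0 + (1-S)\,\mathrm{Unif}(0,1]$ for $S \in [0,1)$. Then for all $x \in [0,1]$, $\mathrm{P}(x_1 \le x \mid x_1 \le x_2) = 1 - \frac{(1-S)^2 (1-x)^2}{1+S^2}$. -/

import Mathlib

open MeasureTheory ProbabilityTheory

/-- The sparse-uniform mixture law `S·δ₀ + (1-S)·Unif(0,1]`. -/
noncomputable def mixLaw (S : ℝ) : Measure ℝ :=
  (ENNReal.ofReal S) • Measure.dirac 0 +
    (ENNReal.ofReal (1 - S)) • (volume.restrict (Set.Ioc (0:ℝ) 1))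

lemma lintegral_ofReal_one_sub (x : ℝ) (hx0 : 0 ≤ x) (hx1 : x ≤ 1) :
    ∫⁻ a in Set.Ioc (0:ℝ) x, ENNReal.ofReal (1 - a) = ENNReal.ofReal (x - x^2/2) := by
  rw [← ofReal_integral_eq_lintegral_ofReal]
  · rw [← intervalIntegral.integral_of_le hx0]
    norm_num [intervalIntegral.integral_sub intervalIntegrable_const
      (intervalIntegral.intervalIntegrable_id)]
  · exact (continuous_const.sub continuous_id).integrableOn_Ioc
  · rw [Filter.EventuallyLE, ae_restrict_iff' measurableSet_Ioc]
    exact ae_of_all _ fun a ha => by simp; nlinarith [ha.2]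

instance mixLaw_sfinite (S : ℝ) : SFinite (mixLaw S) := by
  unfold mixLaw; infer_instance

lemma lintegral_mixLaw (S : ℝ) (f : ℝ → ENNReal) :
    ∫⁻ a, f a ∂(mixLaw S) =
      ENNReal.ofReal S * f 0 +
        ENNReal.ofReal (1 - S) * ∫⁻ a in Set.Ioc (0:ℝ) 1, f a := by
  rw [mixLaw, lintegral_add_measure, lintegral_smul_measure, lintegral_smul_measure,
    lintegral_dirac, smul_eq_mul, smul_eq_mul]

lemma mixLaw_Ici_nonpos {S : ℝ} (hS : S ∈ Set.Ico (0:ℝ) 1) {a : ℝ} (ha : a ≤ 0) :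
    mixLaw S (Set.Ici a) = 1 := by
  have h1 : Set.Ici a ∩ Set.Ioc (0:ℝ) 1 = Set.Ioc 0 1 := by
    apply Set.inter_eq_self_of_subset_right
    exact fun y hy => le_trans ha (le_of_lt hy.1)
  rw [mixLaw, Measure.add_apply, Measure.smul_apply, Measure.smul_apply,
    Measure.restrict_apply measurableSet_Ici, h1,
    Measure.dirac_apply_of_mem (Set.mem_Ici.mpr ha)]
  rw [Real.volume_Ioc]
  simp only [smul_eq_mul, mul_one, sub_zero, ENNReal.ofReal_one, mul_one]
  rw [← ENNReal.ofReal_add hS.1 (by linarith [hS.2] : (0:ℝ) ≤ 1 - S)]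
  norm_num

lemma mixLaw_Ici_pos {S : ℝ} {a : ℝ} (ha0 : 0 < a) (ha1 : a ≤ 1) :
    mixLaw S (Set.Ici a) = ENNReal.ofReal (1 - S) * ENNReal.ofReal (1 - a) := by
  have h1 : Set.Ici a ∩ Set.Ioc (0:ℝ) 1 = Set.Icc a 1 := by
    ext y
    simp only [Set.mem_inter_iff, Set.mem_Ici, Set.mem_Ioc, Set.mem_Icc]
    constructor
    · rintro ⟨h1, h2, h3⟩; exact ⟨h1, h3⟩
    · rintro ⟨h1, h2⟩; exact ⟨h1, lt_of_lt_of_le ha0 h1, h2⟩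
  have h0 : (0:ℝ) ∉ Set.Ici a := by simp; linarith
  rw [mixLaw, Measure.add_apply, Measure.smul_apply, Measure.smul_apply,
    Measure.restrict_apply measurableSet_Ici, h1, Real.volume_Icc,
    Measure.dirac_apply' _ measurableSet_Ici, Set.indicator_of_notMem h0]
  simp

theorem stmt1 {Ω : Type*} [MeasureSpace Ω] [IsProbabilityMeasure (ℙ : Measure Ω)]
    (S : ℝ) (hS : S ∈ Set.Ico (0:ℝ) 1)
    (X1 X2 : Ω → ℝ) (hX1 : Measurable X1) (hX2 : Measurable X2)
    (hindep : IndepFun X1 X2)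
    (hL1 : Measure.map X1 ℙ = mixLaw S) (hL2 : Measure.map X2 ℙ = mixLaw S) :
    ∀ x ∈ Set.Icc (0:ℝ) 1,
      ℙ[{ω | X1 ω ≤ x} | {ω | X1 ω ≤ X2 ω}] =
        ENNReal.ofReal (1 - (1 - S)^2 * (1 - x)^2 / (1 + S^2)) := by
  rintro x ⟨hx0, hx1⟩
  have hS0 := hS.1
  have hS1 : (0:ℝ) ≤ 1 - S := by linarith [hS.2]
  set μ := mixLaw S with hμ
  have hmap : Measure.map (fun ω => (X1 ω, X2 ω)) ℙ = μ.prod μ := by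
    rw [(indepFun_iff_map_prod_eq_prod_map_map hX1.aemeasurable hX2.aemeasurable).mp hindep,
      hL1, hL2]
  have hBs : MeasurableSet {p : ℝ × ℝ | p.1 ≤ p.2} :=
    measurableSet_le measurable_fst measurable_snd
  have hAs : MeasurableSet {p : ℝ × ℝ | p.1 ≤ x} :=
    measurable_fst measurableSet_Iic
  have hB : MeasurableSet {ω | X1 ω ≤ X2 ω} := measurableSet_le hX1 hX2
  have hmeas1 : Measurable fun a : ℝ => ENNReal.ofReal (1 - a) :=
    (measurable_const.sub measurable_id).ennreal_ofReal
  -- the measure of {X1 ≤ X2}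
  have hpB : ℙ {ω | X1 ω ≤ X2 ω} = ENNReal.ofReal ((1 + S^2)/2) := by
    have : {ω | X1 ω ≤ X2 ω} = (fun ω => (X1 ω, X2 ω)) ⁻¹' {p : ℝ × ℝ | p.1 ≤ p.2} := rfl
    rw [this, ← Measure.map_apply (hX1.prodMk hX2) hBs, hmap,
      Measure.prod_apply hBs]
    have hsec : ∀ a : ℝ, (Prod.mk a ⁻¹' {p : ℝ × ℝ | p.1 ≤ p.2}) = Set.Ici a := fun a => rfl
    simp only [hsec]
    rw [lintegral_mixLaw]
    rw [mixLaw_Ici_nonpos hS le_rfl]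
    rw [setLIntegral_congr_fun measurableSet_Ioc
      (fun a ha => mixLaw_Ici_pos (S := S) ha.1 ha.2)]
    rw [lintegral_const_mul _ hmeas1, lintegral_ofReal_one_sub 1 zero_le_one le_rfl]
    rw [← ENNReal.ofReal_mul hS1, ← ENNReal.ofReal_mul hS1]
    rw [mul_one, ← ENNReal.ofReal_add hS0 (by nlinarith)]
    norm_num
    ring_nf
  -- the measure of the intersection
  have hpBA : ℙ ({ω | X1 ω ≤ X2 ω} ∩ {ω | X1 ω ≤ x}) =
      ENNReal.ofReal (S + (1 - S) * ((1 - S) * (x - x^2/2))) := by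
    have : {ω | X1 ω ≤ X2 ω} ∩ {ω | X1 ω ≤ x} =
        (fun ω => (X1 ω, X2 ω)) ⁻¹' ({p : ℝ × ℝ | p.1 ≤ p.2} ∩ {p : ℝ × ℝ | p.1 ≤ x}) := rfl
    rw [this, ← Measure.map_apply (hX1.prodMk hX2) (hBs.inter hAs), hmap,
      Measure.prod_apply (hBs.inter hAs)]
    have hsec : ∀ a : ℝ,
        μ (Prod.mk a ⁻¹' ({p : ℝ × ℝ | p.1 ≤ p.2} ∩ {p : ℝ × ℝ | p.1 ≤ x})) =
          (Set.Iic x).indicator (fun a => μ (Set.Ici a)) a := by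
      intro a
      by_cases h : a ≤ x
      · rw [Set.indicator_of_mem (Set.mem_Iic.mpr h)]
        congr 1
        ext b
        simp [Set.mem_preimage, h]
      · rw [Set.indicator_of_notMem (by simpa using h)]
        convert measure_empty (μ := μ)
        ext b
        simp [Set.mem_preimage, h]
    simp only [hsec]
    rw [lintegral_mixLaw]
    rw [Set.indicator_of_mem (Set.mem_Iic.mpr hx0), mixLaw_Ici_nonpos hS le_rfl]
    have hcong : ∫⁻ a in Set.Ioc (0:ℝ) 1, (Set.Iic x).indicator (fun a => μ (Set.Ici a)) a =
        ∫⁻ a in Set.Ioc (0:ℝ) 1,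
          (Set.Iic x).indicator (fun a => ENNReal.ofReal (1-S) * ENNReal.ofReal (1-a)) a := by
      apply setLIntegral_congr_fun measurableSet_Ioc
      refine fun a ha => ?_
      by_cases h : a ≤ x
      · rw [Set.indicator_of_mem (Set.mem_Iic.mpr h), Set.indicator_of_mem (Set.mem_Iic.mpr h)]
        exact mixLaw_Ici_pos ha.1 ha.2
      · rw [Set.indicator_of_notMem (by simpa using h),
          Set.indicator_of_notMem (by simpa using h)]
    rw [hcong, lintegral_indicator measurableSet_Iic _, Measure.restrict_restrict measurableSet_Iic]
    have : Set.Iic x ∩ Set.Ioc (0:ℝ) 1 = Set.Ioc 0 x := by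
      ext y
      simp only [Set.mem_inter_iff, Set.mem_Iic, Set.mem_Ioc]
      constructor
      · rintro ⟨h1, h2, h3⟩; exact ⟨h2, h1⟩
      · rintro ⟨h1, h2⟩; exact ⟨h2, h1, le_trans h2 hx1⟩
    rw [this, lintegral_const_mul _ hmeas1, lintegral_ofReal_one_sub x hx0 hx1]
    rw [← ENNReal.ofReal_mul hS1, ← ENNReal.ofReal_mul hS1,
      mul_one, ← ENNReal.ofReal_add hS0
        (mul_nonneg hS1 (mul_nonneg hS1 (by nlinarith)))]
  -- assemble
  rw [cond_apply hB, hpB, hpBA, ← ENNReal.div_eq_inv_mul,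
    ← ENNReal.ofReal_div_of_pos (by positivity)]
  congr 1
  have h2 : (1:ℝ) + S^2 > 0 := by positivity
  field_simp
  ring
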